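/- arXiv:2510.07617 — 2 statements merged into one kernel-verified Lean document; each statement's English description precedes it below -/
import Mathlib

section
/- Let X be a set and S a finite subset of the free monoid ⟨X⟩. Then there is exactly one overlap-free subset T ⊆ ⟨X⟩\{1} inverse-equivalent to S, namely the set of nonidentity elements of ⟨X⟩ that become invertible in ⟨X : i(S)⟩ but admit no factorization into two nonidentity elements of ⟨X⟩ that become invertible in ⟨X : i(S)⟩. -/
namespace AdjoinInverses

variable {X : Type*}

/-- The embedding of the free monoid on `X` into the free monoid on `X ⊕ S`. -/
def emb (S : Set (FreeMonoid X)) : FreeMonoid X →* FreeMonoid (X ⊕ S) :=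
  FreeMonoid.map Sum.inl

/-- The generator `i(w)` corresponding to `w ∈ S`. -/
def igen (S : Set (FreeMonoid X)) (w : S) : FreeMonoid (X ⊕ S) :=
  FreeMonoid.of (Sum.inr w)

/-- The defining relations `w ⬝ i(w) = 1` and `i(w) ⬝ w = 1` for `w ∈ S`. -/
inductive InvRel (S : Set (FreeMonoid X)) : FreeMonoid (X ⊕ S) → FreeMonoid (X ⊕ S) → Prop
  | mul_inv (w : S) : InvRel S (emb S w.1 * igen S w) 1
  | inv_mul (w : S) : InvRel S (igen S w * emb S w.1) 1

/-- The congruence generated by the defining relations. -/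
def invCon (S : Set (FreeMonoid X)) : Con (FreeMonoid (X ⊕ S)) := conGen (InvRel S)

/-- The monoid `⟨X : i(S)⟩` obtained from the free monoid on `X` by universally
adjoining a two-sided inverse to each element of `S`. -/
def AdjInv (S : Set (FreeMonoid X)) : Type _ := (invCon S).Quotient

instance (S : Set (FreeMonoid X)) : Monoid (AdjInv S) := Con.monoid _

/-- The natural homomorphism `⟨X⟩ → ⟨X : i(S)⟩`. -/
def natHom (S : Set (FreeMonoid X)) : FreeMonoid X →* AdjInv S :=
  ((invCon S).mk').comp (emb S)

/-- The adjoined inverse `i(w)`, as an element of `⟨X : i(S)⟩`. -/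
def invElt (S : Set (FreeMonoid X)) (w : S) : AdjInv S :=
  (invCon S).mk' (igen S w)

/-- `S` and `S'` are inverse-equivalent: each element of `S'` becomes invertible in
`⟨X : i(S)⟩` and each element of `S` becomes invertible in `⟨X : i(S')⟩`. -/
def InvEquiv (S S' : Set (FreeMonoid X)) : Prop :=
  (∀ w ∈ S', IsUnit (natHom S w)) ∧ ∀ w ∈ S, IsUnit (natHom S' w)

/-- Two (nonidentity) elements of the free monoid overlap: one can be written `a*b`
and the other `b*c` with `b ≠ 1` and at most one of `a`, `c` equal to `1`. -/
def Overlap (u v : FreeMonoid X) : Prop :=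
  ∃ a b c : FreeMonoid X, b ≠ 1 ∧ (a ≠ 1 ∨ c ≠ 1) ∧ u = a * b ∧ v = b * c

/-- A set `T` is overlap-free if no pair of elements of `T` (distinct or not) overlap. -/
def OverlapFree (T : Set (FreeMonoid X)) : Prop :=
  ∀ u ∈ T, ∀ v ∈ T, ¬ Overlap u v

/-! ### Generic list lemmas -/

section ListLemmas

variable {α β : Type*}

theorem snoc_inj {x y : List α} {a b : α} (h : x ++ [a] = y ++ [b]) : x = y ∧ a = b := by
  have := List.append_inj' h (by simp)
  exact ⟨this.1, by simpa using this.2⟩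

theorem infix_snoc {l w : List α} {a : α} (h : l <:+: w ++ [a]) :
    l <:+: w ∨ l <:+ w ++ [a] := by
  obtain ⟨s, t, hst⟩ := h
  rcases List.eq_nil_or_concat t with rfl | ⟨t', b, rfl⟩
  · right
    exact ⟨s, by simpa using hst⟩
  · left
    rw [List.concat_eq_append, ← List.append_assoc] at hst
    obtain ⟨h1, -⟩ := snoc_inj hst
    exact ⟨s, t', h1⟩

/-- Every entry of the list is of the form `Sum.inl _`. -/
def AllInl (l : List (α ⊕ β)) : Prop := ∀ x ∈ l, ∃ y, x = Sum.inl y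

theorem allInl_map (u : List α) : AllInl (u.map (Sum.inl : α → α ⊕ β)) := by
  intro x hx
  simp only [List.mem_map] at hx
  obtain ⟨y, -, rfl⟩ := hx
  exact ⟨y, rfl⟩

theorem allInl_of_subset {l l' : List (α ⊕ β)} (h : l' ⊆ l) (hl : AllInl l) : AllInl l' :=
  fun x hx => hl x (h hx)

theorem AllInl.eq_map {l : List (α ⊕ β)} (h : AllInl l) : ∃ u : List α, l = u.map Sum.inl := by
  induction l with
  | nil => exact ⟨[], rfl⟩
  | cons x l ih =>
    obtain ⟨y, rfl⟩ := h x (List.mem_cons_self)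
    obtain ⟨u, rfl⟩ := ih fun z hz => h z (List.mem_cons_of_mem _ hz)
    exact ⟨y :: u, rfl⟩

theorem not_inr_mem_map {u : List α} {b : β} (h : Sum.inr b ∈ u.map (Sum.inl : α → α ⊕ β)) :
    False := by simp at h

theorem mid_inr_eq {A q B C : List (α ⊕ β)} {t s : β}
    (hB : AllInl B) (hC : AllInl C)
    (h : A ++ Sum.inr t :: B = q ++ Sum.inr s :: C) : A = q ∧ t = s ∧ B = C := by
  rcases List.append_eq_append_iff.1 h with ⟨m, hq, hm⟩ | ⟨m, hA, hm⟩
  · cases m with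
    | nil =>
      obtain ⟨h1, h2⟩ := List.cons.injEq .. ▸ hm
      exact ⟨by simpa using hq.symm, Sum.inr.injEq .. ▸ h1, h2⟩
    | cons x m' =>
      obtain ⟨h1, h2⟩ := List.cons.injEq .. ▸ hm
      exfalso
      obtain ⟨y, hy⟩ := hB (Sum.inr s) (h2 ▸ List.mem_append_right m' (List.mem_cons_self))
      simp at hy
  · cases m with
    | nil =>
      obtain ⟨h1, h2⟩ := List.cons.injEq .. ▸ hm
      exact ⟨by simpa using hA, (Sum.inr.injEq .. ▸ h1).symm, h2.symm⟩
    | cons x m' =>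
      obtain ⟨h1, h2⟩ := List.cons.injEq .. ▸ hm
      exfalso
      obtain ⟨y, hy⟩ := hC (Sum.inr t) (h2.symm ▸ List.mem_append_right m' (List.mem_cons_self))
      simp at hy

theorem split_at_inr {A B q C : List (α ⊕ β)} {s : β} (hB : AllInl B)
    (h : A ++ B = q ++ Sum.inr s :: C) : ∃ δ, A = q ++ Sum.inr s :: δ ∧ δ ++ B = C := by
  rcases List.append_eq_append_iff.1 h with ⟨m, hq, hm⟩ | ⟨m, hA, hm⟩
  · exfalso
    obtain ⟨y, hy⟩ := hB (Sum.inr s) (hm ▸ List.mem_append_right m (List.mem_cons_self))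
    simp at hy
  · cases m with
    | nil =>
      exfalso
      simp only [List.nil_append] at hm
      obtain ⟨y, hy⟩ := hB (Sum.inr s) (hm ▸ List.mem_cons_self)
      simp at hy
    | cons x m' =>
      obtain ⟨h1, h2⟩ := List.cons.injEq .. ▸ hm.symm
      exact ⟨m', by rw [hA, h1], h2⟩

end ListLemmas

/-! ### The reduction machine for an overlap-free set -/

section Machine

variable {X : Type*} (T : Set (FreeMonoid X))

/-- Embedding of a word over `X` into the letters `X ⊕ T`. -/
def embl (u : List X) : List (X ⊕ ↥T) := u.map Sum.inl

/-- The relator `t ⬝ i(t)`. -/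
def rel1 (t : ↥T) : List (X ⊕ ↥T) := embl T t.1.toList ++ [Sum.inr t]

/-- The relator `i(t) ⬝ t`. -/
def rel2 (t : ↥T) : List (X ⊕ ↥T) := Sum.inr t :: embl T t.1.toList

def IsRel (l : List (X ⊕ ↥T)) : Prop := ∃ t, l = rel1 T t ∨ l = rel2 T t

/-- A word is reduced if it contains no relator as a factor. -/
def Reduced (r : List (X ⊕ ↥T)) : Prop := ∀ l, IsRel T l → ¬ l <:+: r

/-- `q` is the result of a pop when pushing `a` onto the stack `r`. -/
def Pops (r : List (X ⊕ ↥T)) (a : X ⊕ ↥T) (q : List (X ⊕ ↥T)) : Prop :=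
  ∃ l, IsRel T l ∧ r ++ [a] = q ++ l

-- Push a letter onto a reduced stack, popping a relator if one is completed.
open Classical in
noncomputable def push (r : List (X ⊕ ↥T)) (a : X ⊕ ↥T) : List (X ⊕ ↥T) :=
  if h : ∃ q, Pops T r a q then h.choose else r ++ [a]

/-- Normal form. -/
noncomputable def red (v : List (X ⊕ ↥T)) : List (X ⊕ ↥T) := v.foldl (push T) []

variable {T}

theorem embl_append (u v : List X) : embl T (u ++ v) = embl T u ++ embl T v :=
  List.map_append

theorem embl_inj {u v : List X} (h : embl T u = embl T v) : u = v :=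
  List.map_injective_iff.2 Sum.inl_injective h

theorem toList_eq_nil_iff {w : FreeMonoid X} : w.toList = [] ↔ w = 1 :=
  ⟨fun h => by rw [← FreeMonoid.ofList_toList w, h]; rfl, fun h => by simp [h]⟩

theorem toList_inj {u v : FreeMonoid X} (h : u.toList = v.toList) : u = v := by
  rw [← FreeMonoid.ofList_toList u, h, FreeMonoid.ofList_toList]

theorem ofList_ne_one {u : List X} (h : u ≠ []) : FreeMonoid.ofList u ≠ 1 := fun h1 =>
  h (by rw [← FreeMonoid.toList_ofList u, h1, FreeMonoid.toList_one])

theorem mul_eq_one_free {u v : FreeMonoid X} (h : u * v = 1) : u = 1 ∧ v = 1 := by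
  have : u.toList ++ v.toList = [] := by
    rw [← FreeMonoid.toList_mul, h, FreeMonoid.toList_one]
  obtain ⟨h1, h2⟩ := List.append_eq_nil_iff.1 this
  exact ⟨toList_eq_nil_iff.1 h1, toList_eq_nil_iff.1 h2⟩

section HT1

variable (hT1 : (1 : FreeMonoid X) ∉ T)
include hT1

theorem mem_ne_one {t : ↥T} : (t : FreeMonoid X) ≠ 1 := fun h => hT1 (h ▸ t.2)

theorem toList_mem_ne_nil (t : ↥T) : (t : FreeMonoid X).toList ≠ [] := fun h =>
  mem_ne_one hT1 (toList_eq_nil_iff.1 h)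

end HT1

theorem exists_snoc_of_ne_nil {α : Type*} {l : List α} (h : l ≠ []) :
    ∃ l' b, l = l' ++ [b] := by
  rcases List.eq_nil_or_concat l with rfl | ⟨L, b, hl⟩
  · exact absurd rfl h
  · exact ⟨L, b, by rw [hl, List.concat_eq_append]⟩

theorem isRel_ne_nil {l : List (X ⊕ ↥T)} (h : IsRel T l) : l ≠ [] := by
  obtain ⟨t, rfl | rfl⟩ := h
  · simp [rel1]
  · simp [rel2]

theorem inr_mem_rel {l : List (X ⊕ ↥T)} (h : IsRel T l) : ∃ t : ↥T, Sum.inr t ∈ l := by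
  obtain ⟨t, rfl | rfl⟩ := h
  · exact ⟨t, List.mem_append_right _ (List.mem_cons_self)⟩
  · exact ⟨t, List.mem_cons_self⟩

section HT1

variable (hT1 : (1 : FreeMonoid X) ∉ T)
include hT1

/-- If a relator ends with the letter `i(t)` then it is `rel1 t`. -/
theorem rel_snoc_inr {l : List (X ⊕ ↥T)} {t : ↥T} (hl : IsRel T l)
    (h : ∃ l', l = l' ++ [Sum.inr t]) : l = rel1 T t := by
  obtain ⟨l', rfl⟩ := h
  obtain ⟨s, hs | hs⟩ := hl
  · rw [rel1] at hs
    obtain ⟨h1, h2⟩ := snoc_inj hs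
    obtain rfl : s = t := by simpa using h2.symm
    exact hs ▸ rfl
  · exfalso
    obtain ⟨u', b, hub⟩ := exists_snoc_of_ne_nil (toList_mem_ne_nil hT1 s)
    rw [rel2, hub, embl_append] at hs
    have hs' : l' ++ [Sum.inr t] = (Sum.inr s :: embl T u') ++ [Sum.inl b] := by
      rw [hs]; simp [embl]
    obtain ⟨-, h2⟩ := snoc_inj hs'
    simp at h2

/-- If a relator ends with the letter `x ∈ X` then it is `rel2 s` with `s` ending in `x`. -/
theorem rel_snoc_inl {l : List (X ⊕ ↥T)} {a : X} (hl : IsRel T l)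
    (h : ∃ l', l = l' ++ [Sum.inl a]) :
    ∃ (s : ↥T) (u' : List X), s.1.toList = u' ++ [a] ∧ l = (Sum.inr s :: embl T u') ++ [Sum.inl a] := by
  obtain ⟨l', rfl⟩ := h
  obtain ⟨s, hs | hs⟩ := hl
  · exfalso
    rw [rel1] at hs
    obtain ⟨-, h2⟩ := snoc_inj hs
    simp at h2
  · obtain ⟨u', b, hub⟩ := exists_snoc_of_ne_nil (toList_mem_ne_nil hT1 s)
    rw [rel2, hub, embl_append] at hs
    have hs' : l' ++ [Sum.inl a] = (Sum.inr s :: embl T u') ++ [Sum.inl b] := by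
      rw [hs]; simp [embl]
    obtain ⟨h1, h2⟩ := snoc_inj hs'
    obtain rfl : b = a := by simpa using h2.symm
    exact ⟨s, u', hub, hs'⟩

/-- Structure of a pop when pushing a letter of `X`. -/
theorem pops_inl {r q : List (X ⊕ ↥T)} {a : X} (h : Pops T r (Sum.inl a) q) :
    ∃ (s : ↥T) (u' : List X), s.1.toList = u' ++ [a] ∧ r = q ++ Sum.inr s :: embl T u' := by
  obtain ⟨l, hl, he⟩ := h
  obtain ⟨l₀, b, rfl⟩ := exists_snoc_of_ne_nil (isRel_ne_nil hl)
  rw [← List.append_assoc] at he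
  obtain ⟨h1, h2⟩ := snoc_inj he
  subst h2
  obtain ⟨s, u', hsu, hl2⟩ := rel_snoc_inl hT1 hl ⟨l₀, rfl⟩
  obtain ⟨h3, -⟩ := snoc_inj hl2
  exact ⟨s, u', hsu, by rw [h1, h3]⟩

/-- Structure of a pop when pushing a letter `i(t)`. -/
theorem pops_inr {r q : List (X ⊕ ↥T)} {t : ↥T} (h : Pops T r (Sum.inr t) q) :
    r = q ++ embl T t.1.toList := by
  obtain ⟨l, hl, he⟩ := h
  obtain ⟨l₀, b, rfl⟩ := exists_snoc_of_ne_nil (isRel_ne_nil hl)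
  rw [← List.append_assoc] at he
  obtain ⟨h1, h2⟩ := snoc_inj he
  subst h2
  have := rel_snoc_inr hT1 hl ⟨l₀, rfl⟩
  rw [rel1] at this
  obtain ⟨h3, -⟩ := snoc_inj this
  rw [h1, h3]

/-- Any two pops agree. -/
theorem pops_unique {r : List (X ⊕ ↥T)} {a : X ⊕ ↥T} {q₁ q₂ : List (X ⊕ ↥T)}
    (h₁ : Pops T r a q₁) (h₂ : Pops T r a q₂) : q₁ = q₂ := by
  cases a with
  | inl x =>
    obtain ⟨s₁, u₁, hs₁, hr₁⟩ := pops_inl hT1 h₁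
    obtain ⟨s₂, u₂, hs₂, hr₂⟩ := pops_inl hT1 h₂
    have := hr₁.symm.trans hr₂
    exact (mid_inr_eq (allInl_map u₁) (allInl_map u₂) this).1
  | inr t =>
    have e1 := pops_inr hT1 h₁
    have e2 := pops_inr hT1 h₂
    exact List.append_cancel_right (e1.symm.trans e2)

theorem push_eq_of_pops {r : List (X ⊕ ↥T)} {a : X ⊕ ↥T} {q : List (X ⊕ ↥T)}
    (h : Pops T r a q) : push T r a = q := by
  have hex : ∃ q, Pops T r a q := ⟨q, h⟩
  rw [push, dif_pos hex]
  exact pops_unique hT1 hex.choose_spec h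

end HT1

theorem push_eq_append {r : List (X ⊕ ↥T)} {a : X ⊕ ↥T} (h : ¬ ∃ q, Pops T r a q) :
    push T r a = r ++ [a] := by
  rw [push, dif_neg h]

theorem reduced_nil : Reduced T [] := fun l hl hinf =>
  isRel_ne_nil hl (List.infix_nil.1 hinf)

theorem Reduced.of_prefix {r q : List (X ⊕ ↥T)} (h : Reduced T r) (hq : q <+: r) :
    Reduced T q := fun l hl hinf => h l hl (hinf.trans hq.isInfix)

theorem reduced_embl (u : List X) : Reduced T (embl T u) := by
  intro l hl hinf
  obtain ⟨t, ht⟩ := inr_mem_rel hl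
  exact not_inr_mem_map (hinf.subset ht)

theorem not_pops_of_reduced {r : List (X ⊕ ↥T)} {a : X ⊕ ↥T} (h : Reduced T (r ++ [a])) :
    ¬ ∃ q, Pops T r a q := by
  rintro ⟨q, l, hl, he⟩
  exact h l hl ⟨q, [], by simp [he]⟩

theorem reduced_snoc_of_not_pops {r : List (X ⊕ ↥T)} {a : X ⊕ ↥T} (hr : Reduced T r)
    (h : ¬ ∃ q, Pops T r a q) : Reduced T (r ++ [a]) := by
  intro l hl hinf
  rcases infix_snoc hinf with h' | h'
  · exact hr l hl h'
  · obtain ⟨q, hq⟩ := h'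
    exact h ⟨q, l, hl, hq.symm⟩

section HT1

variable (hT1 : (1 : FreeMonoid X) ∉ T)
include hT1

theorem push_cases {r : List (X ⊕ ↥T)} (hr : Reduced T r) (a : X ⊕ ↥T) :
    (push T r a = r ++ [a] ∧ Reduced T (r ++ [a])) ∨
    (∃ q l, IsRel T l ∧ r ++ [a] = q ++ l ∧ push T r a = q ∧ Reduced T q ∧ q <+: r) := by
  by_cases h : ∃ q, Pops T r a q
  · right
    obtain ⟨q, l, hl, he⟩ := h
    have hpre : q <+: r := by
      obtain ⟨l₀, b, rfl⟩ := exists_snoc_of_ne_nil (isRel_ne_nil hl)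
      rw [← List.append_assoc] at he
      obtain ⟨h1, -⟩ := snoc_inj he
      exact ⟨l₀, h1.symm⟩
    exact ⟨q, l, hl, he, push_eq_of_pops hT1 ⟨l, hl, he⟩, hr.of_prefix hpre, hpre⟩
  · left
    exact ⟨push_eq_append h, reduced_snoc_of_not_pops hr h⟩

theorem reduced_foldl : ∀ (v r : List (X ⊕ ↥T)), Reduced T r →
    Reduced T (List.foldl (push T) r v) := by
  intro v
  induction v with
  | nil => exact fun r h => h
  | cons a v ih =>
    intro r hr
    rcases push_cases hT1 hr a with ⟨hp, h2⟩ | ⟨q, _l, _, _, hp, hq, _⟩ <;>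
      rw [List.foldl_cons, hp]
    · exact ih _ h2
    · exact ih _ hq

omit hT1 in
theorem foldl_push_of_reduced : ∀ (u q : List (X ⊕ ↥T)), Reduced T (q ++ u) →
    List.foldl (push T) q u = q ++ u := by
  intro u
  induction u with
  | nil => simp
  | cons a u ih =>
    intro q hq
    have h1 : Reduced T ((q ++ [a]) ++ u) := by
      rw [List.append_assoc]; exact hq
    have h2 : Reduced T (q ++ [a]) := h1.of_prefix ⟨u, rfl⟩
    rw [List.foldl_cons, push_eq_append (not_pops_of_reduced h2), ih _ h1,
      List.append_assoc]
    rfl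

omit hT1 in
theorem red_of_reduced {r : List (X ⊕ ↥T)} (h : Reduced T r) : red T r = r := by
  rw [red]
  exact foldl_push_of_reduced r [] h

theorem reduced_red (v : List (X ⊕ ↥T)) : Reduced T (red T v) :=
  reduced_foldl hT1 v [] reduced_nil

end HT1

section Absorb

variable (hT1 : (1 : FreeMonoid X) ∉ T) (hTo : OverlapFree T)
include hT1 hTo

/-- Pushing the letters of `t` onto a reduced stack ending with `i(t)` pops everything. -/
theorem foldl_push_after_inr (t : ↥T) :
    ∀ (v u : List X) (r : List (X ⊕ ↥T)), t.1.toList = u ++ v → v ≠ [] →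
      Reduced T (r ++ Sum.inr t :: embl T u) →
      List.foldl (push T) (r ++ Sum.inr t :: embl T u) (embl T v) = r := by
  intro v
  induction v with
  | nil => intro u r _ hv; exact absurd rfl hv
  | cons a v ih =>
    intro u r ht _hv hred
    by_cases hv0 : v = []
    · subst hv0
      have hpop : Pops T (r ++ Sum.inr t :: embl T u) (Sum.inl a) r := by
        refine ⟨rel2 T t, ⟨t, Or.inr rfl⟩, ?_⟩
        rw [rel2, ht]
        simp [embl, List.append_assoc]
      show List.foldl (push T) (r ++ Sum.inr t :: embl T u) (Sum.inl a :: embl T []) = r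
      rw [List.foldl_cons, push_eq_of_pops hT1 hpop]
      rfl
    · have hnp : ¬ ∃ q, Pops T (r ++ Sum.inr t :: embl T u) (Sum.inl a) q := by
        rintro ⟨q, hq⟩
        obtain ⟨s, u'', hsu, hsplit⟩ := pops_inl hT1 hq
        obtain ⟨rfl, rfl, h3⟩ := mid_inr_eq (allInl_map u) (allInl_map u'') hsplit
        have : t.1.toList = u ++ [a] := by
          rw [hsu, embl_inj h3]
        rw [ht] at this
        have := List.append_cancel_left this
        simp only [List.cons.injEq] at this
        exact hv0 this.2
      have heq : (r ++ Sum.inr t :: embl T u) ++ [Sum.inl a] = r ++ Sum.inr t :: embl T (u ++ [a]) := by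
        simp [embl, List.append_assoc]
      show List.foldl (push T) (r ++ Sum.inr t :: embl T u) (Sum.inl a :: embl T v) = r
      rw [List.foldl_cons, push_eq_append hnp, heq]
      exact ih (u ++ [a]) r (by rw [ht, List.append_assoc]; rfl)
        hv0 (heq ▸ reduced_snoc_of_not_pops hred hnp)

end Absorb

theorem overlap_mk {p q : FreeMonoid X} {A B C : List X} (hB : B ≠ [])
    (hAC : A ≠ [] ∨ C ≠ []) (hp : p.toList = A ++ B) (hq : q.toList = B ++ C) :
    Overlap p q := by
  refine ⟨FreeMonoid.ofList A, FreeMonoid.ofList B, FreeMonoid.ofList C,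
    ofList_ne_one hB, ?_, ?_, ?_⟩
  · rcases hAC with h | h
    exacts [Or.inl (ofList_ne_one h), Or.inr (ofList_ne_one h)]
  · apply toList_inj
    rw [hp, FreeMonoid.toList_mul, FreeMonoid.toList_ofList, FreeMonoid.toList_ofList]
  · apply toList_inj
    rw [hq, FreeMonoid.toList_mul, FreeMonoid.toList_ofList, FreeMonoid.toList_ofList]

section Absorb2

variable (hT1 : (1 : FreeMonoid X) ∉ T) (hTo : OverlapFree T)
include hT1 hTo

/-- Pushing the letters of `t` onto a reduced stack not ending in `i(t)` only appends. -/
theorem foldl_push_pos (t : ↥T) :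
    ∀ (v u : List X) (r : List (X ⊕ ↥T)), t.1.toList = u ++ v →
      (∀ q, r ≠ q ++ [Sum.inr t]) →
      Reduced T (r ++ embl T u) →
      List.foldl (push T) (r ++ embl T u) (embl T v) = r ++ embl T (u ++ v) ∧
        Reduced T (r ++ embl T (u ++ v)) := by
  intro v
  induction v with
  | nil =>
    intro u r _ _ hred
    constructor
    · show r ++ embl T u = _
      rw [List.append_nil]
    · rw [List.append_nil]
      exact hred
  | cons a v ih =>
    intro u r ht hr hred
    have hnp : ¬ ∃ q, Pops T (r ++ embl T u) (Sum.inl a) q := by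
      rintro ⟨q, hq⟩
      obtain ⟨s, u', hsu, hsplit⟩ := pops_inl hT1 hq
      obtain ⟨δ, hrq, hδ⟩ := split_at_inr (allInl_map u) hsplit
      obtain ⟨σ, rfl⟩ := (allInl_of_subset (List.IsPrefix.subset ⟨embl T u, hδ⟩)
        (allInl_map u')).eq_map
      have hu' : u' = σ ++ u := embl_inj (by rw [embl_append]; exact hδ.symm)
      rw [hu'] at hsu
      by_cases hσ : σ = []
      · subst hσ
        simp only [List.nil_append] at hsu
        by_cases hst : s = t
        · subst hst
          exact hr q (by rw [hrq]; rfl)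
        · by_cases hv : v = []
          · subst hv
            refine hst (Subtype.ext (toList_inj ?_))
            rw [hsu, ht]
          · exact hTo s.1 s.2 t.1 t.2 (overlap_mk (A := []) (B := u ++ [a]) (C := v)
              (by simp) (Or.inr hv) (by simpa using hsu)
              (by rw [ht]; simp))
      · exact hTo s.1 s.2 t.1 t.2 (overlap_mk (A := σ) (B := u ++ [a]) (C := v)
          (by simp) (Or.inl hσ) (by rw [hsu]; simp)
          (by rw [ht]; simp))
    have heq : (r ++ embl T u) ++ [Sum.inl a] = r ++ embl T (u ++ [a]) := by
      simp [embl, List.append_assoc]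
    have hred' : Reduced T (r ++ embl T (u ++ [a])) :=
      heq ▸ reduced_snoc_of_not_pops hred hnp
    have hrec := ih (u ++ [a]) r (by rw [ht]; simp) hr hred'
    constructor
    · show List.foldl (push T) (r ++ embl T u) (Sum.inl a :: embl T v) = _
      rw [List.foldl_cons, push_eq_append hnp, heq, hrec.1]
      congr 2
      simp
    · have h2 := hrec.2
      rw [show (u ++ [a]) ++ v = u ++ a :: v by simp] at h2
      exact h2

theorem foldl_push_rel2 {r : List (X ⊕ ↥T)} (hr : Reduced T r) (t : ↥T) :
    List.foldl (push T) r (rel2 T t) = r := by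
  rw [rel2, List.foldl_cons]
  by_cases h : ∃ q, r = q ++ embl T t.1.toList
  · obtain ⟨q, rfl⟩ := h
    have hpop : Pops T (q ++ embl T t.1.toList) (Sum.inr t) q :=
      ⟨rel1 T t, ⟨t, Or.inl rfl⟩, by rw [rel1, List.append_assoc]⟩
    rw [push_eq_of_pops hT1 hpop]
    have hq : ∀ q', q ≠ q' ++ [Sum.inr t] := by
      rintro q' rfl
      exact hr (rel2 T t) ⟨t, Or.inr rfl⟩ ⟨q', [], by simp [rel2]⟩
    have h2 := (foldl_push_pos hT1 hTo t t.1.toList [] q (by simp) hq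
      (by simpa [embl] using hr.of_prefix ⟨embl T t.1.toList, rfl⟩)).1
    simpa [embl] using h2
  · have hnp : ¬ ∃ q, Pops T r (Sum.inr t) q := fun ⟨q, hq⟩ => h ⟨q, pops_inr hT1 hq⟩
    rw [push_eq_append hnp]
    have hred2 : Reduced T (r ++ [Sum.inr t]) := reduced_snoc_of_not_pops hr hnp
    exact foldl_push_after_inr hT1 hTo t t.1.toList [] r (by simp)
      (toList_mem_ne_nil hT1 t) hred2

theorem foldl_push_rel1 {r : List (X ⊕ ↥T)} (hr : Reduced T r) (t : ↥T) :
    List.foldl (push T) r (rel1 T t) = r := by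
  rw [rel1, List.foldl_append]
  by_cases h : ∃ q, r = q ++ [Sum.inr t]
  · obtain ⟨q, rfl⟩ := h
    have h1 := foldl_push_after_inr hT1 hTo t t.1.toList [] q rfl
      (toList_mem_ne_nil hT1 t) hr
    rw [show (q ++ [Sum.inr t] : List (X ⊕ ↥T)) = q ++ Sum.inr t :: embl T [] from rfl, h1]
    have hnp : ¬ ∃ q', Pops T q (Sum.inr t) q' := by
      rintro ⟨q', hq⟩
      have h2 := pops_inr hT1 hq
      exact hr (rel1 T t) ⟨t, Or.inl rfl⟩ ⟨q', [], by rw [h2, rel1]; simp⟩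
    show List.foldl (push T) q [Sum.inr t] = q ++ [Sum.inr t]
    rw [List.foldl_cons, List.foldl_nil]
    exact push_eq_append hnp
  · have hq : ∀ q, r ≠ q ++ [Sum.inr t] := fun q hq => h ⟨q, hq⟩
    have h1 : List.foldl (push T) r (embl T t.1.toList) = r ++ embl T t.1.toList := by
      simpa [embl] using (foldl_push_pos hT1 hTo t t.1.toList [] r (by simp) hq
        (by simpa [embl] using hr)).1
    rw [h1]
    have hpop : Pops T (r ++ embl T t.1.toList) (Sum.inr t) r :=
      ⟨rel1 T t, ⟨t, Or.inl rfl⟩, by rw [rel1, List.append_assoc]⟩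
    rw [show [Sum.inr t] = Sum.inr t :: ([] : List (X ⊕ ↥T)) from rfl,
      List.foldl_cons, List.foldl_nil]
    exact push_eq_of_pops hT1 hpop

theorem foldl_push_rel {r l : List (X ⊕ ↥T)} (hr : Reduced T r) (hl : IsRel T l) :
    List.foldl (push T) r l = r := by
  obtain ⟨t, rfl | rfl⟩ := hl
  exacts [foldl_push_rel1 hT1 hTo hr t, foldl_push_rel2 hT1 hTo hr t]

end Absorb2

/-- One-step reduction: delete one relator factor. -/
def RStep (T : Set (FreeMonoid X)) : List (X ⊕ ↥T) → List (X ⊕ ↥T) → Prop :=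
  fun p q => ∃ A B l, IsRel T l ∧ p = A ++ l ++ B ∧ q = A ++ B

section RStepSec

variable (hT1 : (1 : FreeMonoid X) ∉ T) (hTo : OverlapFree T)
include hT1 hTo

theorem red_rstep {p q : List (X ⊕ ↥T)} (h : RStep T p q) : red T p = red T q := by
  obtain ⟨A, B, l, hl, rfl, rfl⟩ := h
  show List.foldl _ [] _ = List.foldl _ [] _
  rw [List.foldl_append, List.foldl_append, List.foldl_append,
    foldl_push_rel hT1 hTo (reduced_foldl hT1 A [] reduced_nil) hl]

omit hTo in
theorem rtg_rstep : ∀ (v r : List (X ⊕ ↥T)), Reduced T r →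
    Relation.ReflTransGen (RStep T) (r ++ v) (List.foldl (push T) r v) := by
  intro v
  induction v with
  | nil =>
    intro r _
    rw [List.append_nil, List.foldl_nil]
  | cons a v ih =>
    intro r hr
    rcases push_cases hT1 hr a with ⟨hp, h2⟩ | ⟨q, l, hl, he, hp, hq, _⟩
    · rw [List.foldl_cons, hp]
      have h3 := ih (r ++ [a]) h2
      rw [List.append_assoc] at h3
      exact h3
    · rw [List.foldl_cons, hp]
      refine Relation.ReflTransGen.head ⟨q, v, l, hl, ?_, rfl⟩ (ih q hq)
      rw [← he, List.append_assoc]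
      rfl

theorem red_rtg {p q : List (X ⊕ ↥T)} (h : Relation.ReflTransGen (RStep T) p q) :
    red T p = red T q := by
  induction h with
  | refl => rfl
  | tail _ h2 ih => exact ih.trans (red_rstep hT1 hTo h2)

theorem red_append_right (u v : List (X ⊕ ↥T)) :
    red T (u ++ v) = red T (u ++ red T v) := by
  have h1 : Relation.ReflTransGen (RStep T) v (red T v) := rtg_rstep hT1 v [] reduced_nil
  have hstep : ∀ a b, RStep T a b → RStep T (u ++ a) (u ++ b) := by
    rintro a b ⟨A, B, l, hl, rfl, rfl⟩
    exact ⟨u ++ A, B, l, hl, by simp [List.append_assoc], by simp [List.append_assoc]⟩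
  exact red_rtg hT1 hTo (Relation.ReflTransGen.lift _ hstep _ _ h1)

omit hTo in
theorem red_append_left (u v : List (X ⊕ ↥T)) :
    red T (u ++ v) = red T (red T u ++ v) := by
  show List.foldl _ [] _ = List.foldl _ [] _
  rw [List.foldl_append, List.foldl_append]
  congr 1
  exact (red_of_reduced (reduced_red hT1 u)).symm

omit hT1 hTo in
theorem toList_emb (w : FreeMonoid X) : (emb T w).toList = embl T w.toList := by
  rw [emb, FreeMonoid.toList_map]
  rfl

theorem red_mul_congr {u v u' v' : FreeMonoid (X ⊕ ↥T)}
    (h1 : red T u.toList = red T u'.toList) (h2 : red T v.toList = red T v'.toList) :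
    red T (u * v).toList = red T (u' * v').toList := by
  rw [FreeMonoid.toList_mul, FreeMonoid.toList_mul, red_append_right hT1 hTo,
    red_append_left hT1, h1, h2, ← red_append_left hT1, ← red_append_right hT1 hTo]

end RStepSec

/-- The kernel of the normal-form map as a congruence. -/
def redCon (hT1 : (1 : FreeMonoid X) ∉ T) (hTo : OverlapFree T) :
    Con (FreeMonoid (X ⊕ ↥T)) :=
  ⟨⟨fun u v => red T u.toList = red T v.toList, ⟨fun _ => rfl, Eq.symm, Eq.trans⟩⟩,
    fun h1 h2 => red_mul_congr hT1 hTo h1 h2⟩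

theorem red_eq_of_invCon (hT1 : (1 : FreeMonoid X) ∉ T) (hTo : OverlapFree T)
    {u v : FreeMonoid (X ⊕ ↥T)} (h : invCon T u v) :
    red T u.toList = red T v.toList := by
  refine (Con.conGen_le.2 ?_ : invCon T ≤ redCon hT1 hTo) h
  rintro x y (⟨t⟩ | ⟨t⟩)
  · show red T (emb T t.1 * igen T t).toList = red T (1 : FreeMonoid (X ⊕ ↥T)).toList
    have h1 : (emb T t.1 * igen T t).toList = rel1 T t := by
      rw [FreeMonoid.toList_mul, rel1, toList_emb, igen, FreeMonoid.toList_of]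
    rw [h1, FreeMonoid.toList_one]
    exact foldl_push_rel hT1 hTo reduced_nil ⟨t, Or.inl rfl⟩
  · show red T (igen T t * emb T t.1).toList = red T (1 : FreeMonoid (X ⊕ ↥T)).toList
    have h1 : (igen T t * emb T t.1).toList = rel2 T t := by
      rw [FreeMonoid.toList_mul, rel2, toList_emb, igen, FreeMonoid.toList_of]
      rfl
    rw [h1, FreeMonoid.toList_one]
    exact foldl_push_rel hT1 hTo reduced_nil ⟨t, Or.inr rfl⟩

theorem red_append (A B : List (X ⊕ ↥T)) :
    red T (A ++ B) = List.foldl (push T) (red T A) B := by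
  rw [red, red]
  exact List.foldl_append

section Analyses

variable (hT1 : (1 : FreeMonoid X) ∉ T)
include hT1

/-- Right analysis: if folding `v` onto the positive stack `w` empties it, some
nonempty suffix of `w` is a prefix of an element of `T`. -/
theorem right_analysis {w : List X} (hw : w ≠ []) :
    ∀ (v s : List (X ⊕ ↥T)), Reduced T (embl T w ++ s) →
      List.foldl (push T) (embl T w ++ s) v = [] →
      ∃ (w₁ α γ : List X) (t : ↥T), w = w₁ ++ α ∧ α ≠ [] ∧ t.1.toList = α ++ γ := by
  intro v
  induction v with
  | nil =>
    intro s hred h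
    rw [List.foldl_nil] at h
    have h1 := (List.append_eq_nil_iff.1 h).1
    exact absurd (by simpa [embl] using h1) hw
  | cons a v ih =>
    intro s hred hfold
    rw [List.foldl_cons] at hfold
    rcases push_cases hT1 hred a with ⟨hp, hnew⟩ | ⟨q, l, hl, he, hp, hq, _⟩
    · rw [hp] at hfold
      refine ih (s ++ [a]) ?_ ?_
      · rw [← List.append_assoc]; exact hnew
      · rw [← List.append_assoc]; exact hfold
    · rw [hp] at hfold
      rw [List.append_assoc] at he
      rcases List.append_eq_append_iff.1 he with ⟨m, hqm, _⟩ | ⟨m, hwm, hm⟩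
      · subst hqm
        exact ih m hq hfold
      · by_cases hm0 : m = []
        · subst hm0
          rw [List.append_nil] at hwm
          subst hwm
          exact ih [] (by simpa using hq) (by simpa using hfold)
        · have hq_inl : AllInl q :=
            allInl_of_subset (List.IsPrefix.subset ⟨m, hwm.symm⟩) (allInl_map w)
          have hm_inl : AllInl m :=
            allInl_of_subset (List.IsSuffix.subset ⟨q, hwm.symm⟩) (allInl_map w)
          obtain ⟨w₁, rfl⟩ := hq_inl.eq_map
          obtain ⟨α, rfl⟩ := hm_inl.eq_map
          rcases hl with ⟨t, rfl | rfl⟩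
          · rw [rel1] at hm
            have hm' : (embl T α ++ s) ++ [a] = embl T t.1.toList ++ [Sum.inr t] := by
              rw [List.append_assoc]
              exact hm.symm
            obtain ⟨h1, -⟩ := snoc_inj hm'
            have hs_inl : AllInl s :=
              allInl_of_subset (List.IsSuffix.subset ⟨embl T α, h1⟩) (allInl_map _)
            obtain ⟨γ, rfl⟩ := hs_inl.eq_map
            refine ⟨w₁, α, γ, t, embl_inj (by rw [embl_append]; exact hwm), ?_, ?_⟩
            · intro h0
              exact hm0 (by rw [h0]; rfl)
            · exact embl_inj (show embl T t.1.toList = embl T (α ++ γ) by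
                rw [embl_append]; exact h1.symm)
          · exfalso
            cases α with
            | nil => exact hm0 rfl
            | cons x α' => simp [rel2, embl] at hm

/-- Left analysis: if folding the positive word `w` onto the stack `v` empties it, some
nonempty prefix of `w` is a suffix of an element of `T`. -/
theorem left_analysis_aux {v : List (X ⊕ ↥T)} :
    ∀ (u₂ u₁ : List X), Reduced T (v ++ embl T u₁) → v ++ embl T u₁ ≠ [] →
      List.foldl (push T) (v ++ embl T u₁) (embl T u₂) = [] →
      ∃ (τ w₂ σ : List X) (s : ↥T), u₁ ++ u₂ = τ ++ w₂ ∧ τ ≠ [] ∧ s.1.toList = σ ++ τ := by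
  intro u₂
  induction u₂ with
  | nil =>
    intro u₁ _ hne h
    simp only [embl, List.map_nil, List.foldl_nil] at h
    exact absurd h hne
  | cons a u₂ ih =>
    intro u₁ hred hne hfold
    have hfold' : List.foldl (push T) (push T (v ++ embl T u₁) (Sum.inl a))
        (embl T u₂) = [] := by
      simpa [embl] using hfold
    rcases push_cases hT1 hred (Sum.inl a) with ⟨hp, hnew⟩ | ⟨q, l, hl, he, hp, _, _⟩
    · rw [hp] at hfold'
      have heq : (v ++ embl T u₁) ++ [Sum.inl a] = v ++ embl T (u₁ ++ [a]) := by
        simp [embl, List.append_assoc]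
      have hrec := ih (u₁ ++ [a]) (heq ▸ hnew) (by rw [← heq]; simp)
        (by rw [← heq]; exact hfold')
      obtain ⟨τ, w₂, σ, s, h1, h2, h3⟩ := hrec
      exact ⟨τ, w₂, σ, s, by rw [← h1]; simp, h2, h3⟩
    · obtain ⟨s, u', hsu, hsplit⟩ := pops_inl hT1 ⟨l, hl, he⟩
      obtain ⟨δ, _, hδ⟩ := split_at_inr (allInl_map u₁) hsplit
      obtain ⟨σ, rfl⟩ := (allInl_of_subset (List.IsPrefix.subset ⟨embl T u₁, hδ⟩)
        (allInl_map u')).eq_map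
      have hu' : u' = σ ++ u₁ := embl_inj (by rw [embl_append]; exact hδ.symm)
      refine ⟨u₁ ++ [a], u₂, σ, s, by simp, by simp, ?_⟩
      rw [hsu, hu', List.append_assoc]

theorem left_analysis {w : List X} (hw : w ≠ []) {v : List (X ⊕ ↥T)}
    (hred : Reduced T v) (hfold : List.foldl (push T) v (embl T w) = []) :
    ∃ (τ w₂ σ : List X) (s : ↥T), w = τ ++ w₂ ∧ τ ≠ [] ∧ s.1.toList = σ ++ τ := by
  by_cases hv : v = []
  · subst hv
    exfalso
    have : List.foldl (push T) [] (embl T w) = embl T w :=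
      foldl_push_of_reduced (embl T w) [] (reduced_embl w)
    rw [this] at hfold
    exact hw (by simpa [embl] using hfold)
  · have := left_analysis_aux hT1 w [] (by simpa [embl] using hred)
      (by simpa [embl] using hv) (by simpa [embl] using hfold)
    simpa using this

end Analyses

theorem exists_reduced_inverse (hT1 : (1 : FreeMonoid X) ∉ T) (hTo : OverlapFree T)
    {w : FreeMonoid X} (h : IsUnit (natHom T w)) :
    ∃ v : List (X ⊕ ↥T), Reduced T v ∧
      List.foldl (push T) (embl T w.toList) v = [] ∧
      List.foldl (push T) v (embl T w.toList) = [] := by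
  obtain ⟨v₀, hv₀⟩ := Con.mk'_surjective (c := invCon T) (↑h.unit⁻¹ : AdjInv T)
  have e1 : (invCon T).mk' (emb T w * v₀) = (invCon T).mk' 1 := by
    rw [map_mul, map_one, hv₀]
    exact h.mul_val_inv
  have e2 : (invCon T).mk' (v₀ * emb T w) = (invCon T).mk' 1 := by
    rw [map_mul, map_one, hv₀]
    exact h.val_inv_mul
  have r1 : red T (emb T w * v₀).toList = [] := by
    rw [red_eq_of_invCon hT1 hTo ((Con.eq _).1 e1), FreeMonoid.toList_one]
    rfl
  have r2 : red T (v₀ * emb T w).toList = [] := by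
    rw [red_eq_of_invCon hT1 hTo ((Con.eq _).1 e2), FreeMonoid.toList_one]
    rfl
  rw [FreeMonoid.toList_mul, toList_emb] at r1 r2
  refine ⟨red T v₀.toList, reduced_red hT1 _, ?_, ?_⟩
  · rw [← red_of_reduced (reduced_embl w.toList), ← red_append, ← red_append_right hT1 hTo]
    exact r1
  · rw [← red_of_reduced (reduced_red hT1 v₀.toList), ← red_append, ← red_append_left hT1]
    exact r2

end Machine

/-! ### Algebraic lemmas -/

theorem isUnit_of_mul_one_of_one_mul {M : Type*} [Monoid M] {a b c : M}
    (h1 : a * b = 1) (h2 : c * a = 1) : IsUnit a := by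
  have hbc : b = c := by
    have h3 : c * (a * b) = c := by rw [h1, mul_one]
    rw [← mul_assoc, h2, one_mul] at h3
    exact h3
  exact ⟨⟨a, b, h1, by rw [hbc]; exact h2⟩, rfl⟩

theorem isUnit_left_of_mul {M : Type*} [Monoid M] {x y : M} (h : IsUnit (x * y))
    (hy : IsUnit y) : IsUnit x := by
  have h2 := h.mul (hy.unit⁻¹).isUnit
  rwa [mul_assoc, hy.mul_val_inv, mul_one] at h2

theorem isUnit_right_of_mul {M : Type*} [Monoid M] {x y : M} (h : IsUnit (x * y))
    (hx : IsUnit x) : IsUnit y := by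
  have h2 := (hx.unit⁻¹).isUnit.mul h
  rwa [← mul_assoc, hx.val_inv_mul, one_mul] at h2

theorem isUnit_middle {M : Type*} [Monoid M] {x y z : M} (hxy : IsUnit (x * y))
    (hyz : IsUnit (y * z)) : IsUnit y := by
  apply isUnit_of_mul_one_of_one_mul (b := z * ↑hyz.unit⁻¹) (c := ↑hxy.unit⁻¹ * x)
  · rw [← mul_assoc, hyz.mul_val_inv]
  · rw [mul_assoc, hxy.val_inv_mul]

section Alg

variable {X : Type*} {T : Set (FreeMonoid X)}

theorem natHom_mul_invElt (t : ↥T) : natHom T t.1 * invElt T t = 1 := by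
  show (invCon T).mk' (emb T t.1) * (invCon T).mk' (igen T t) = 1
  rw [← map_mul, ← map_one ((invCon T).mk')]
  exact (Con.eq _).2 (ConGen.Rel.of _ _ (InvRel.mul_inv t))

theorem invElt_mul_natHom (t : ↥T) : invElt T t * natHom T t.1 = 1 := by
  show (invCon T).mk' (igen T t) * (invCon T).mk' (emb T t.1) = 1
  rw [← map_mul, ← map_one ((invCon T).mk')]
  exact (Con.eq _).2 (ConGen.Rel.of _ _ (InvRel.inv_mul t))

theorem isUnit_natHom_of_mem {w : FreeMonoid X} (h : w ∈ T) : IsUnit (natHom T w) :=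
  isUnit_of_mul_one_of_one_mul (natHom_mul_invElt ⟨w, h⟩) (invElt_mul_natHom ⟨w, h⟩)

theorem isUnit_natHom_of_mem_closure {w : FreeMonoid X} (h : w ∈ Submonoid.closure T) :
    IsUnit (natHom T w) := by
  induction h using Submonoid.closure_induction with
  | mem x hx => exact isUnit_natHom_of_mem hx
  | one => rw [map_one]; exact isUnit_one
  | mul x y hx hy ihx ihy => rw [map_mul]; exact ihx.mul ihy

theorem closure_head {w : FreeMonoid X} (h : w ∈ Submonoid.closure T) (hw : w ≠ 1) :
    ∃ t w', t ∈ T ∧ w' ∈ Submonoid.closure T ∧ w = t * w' := by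
  obtain ⟨l, hl, rfl⟩ := Submonoid.exists_list_of_mem_closure h
  cases l with
  | nil => simp at hw
  | cons t l =>
    exact ⟨t, l.prod, hl t (List.mem_cons_self),
      Submonoid.list_prod_mem _
        (fun y hy => Submonoid.subset_closure (hl y (List.mem_cons_of_mem _ hy))),
      (List.prod_cons).symm⟩

theorem closure_tail {w : FreeMonoid X} (h : w ∈ Submonoid.closure T) (hw : w ≠ 1) :
    ∃ w' t, w' ∈ Submonoid.closure T ∧ t ∈ T ∧ w = w' * t := by
  obtain ⟨l, hl, rfl⟩ := Submonoid.exists_list_of_mem_closure h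
  by_cases hl0 : l = []
  · subst hl0; simp at hw
  · obtain ⟨l', t, rfl⟩ := exists_snoc_of_ne_nil hl0
    refine ⟨l'.prod, t, Submonoid.list_prod_mem _
      (fun y hy => Submonoid.subset_closure (hl y (List.mem_append_left _ hy))),
      hl t (List.mem_append_right _ (List.mem_singleton_self t)), ?_⟩
    rw [List.prod_append, List.prod_singleton]

theorem toList_ne_nil_of_ne_one {w : FreeMonoid X} (h : w ≠ 1) : w.toList ≠ [] :=
  fun h0 => h (toList_eq_nil_iff.1 h0)

/-! ### The key lemma: for overlap-free `T`, invertible positive words lie in `⟨T⟩` -/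

theorem key (hT1 : (1 : FreeMonoid X) ∉ T) (hTo : OverlapFree T) :
    ∀ w : FreeMonoid X, IsUnit (natHom T w) → w ∈ Submonoid.closure T := by
  suffices H : ∀ (n : ℕ) (w : FreeMonoid X), w.toList.length ≤ n →
      IsUnit (natHom T w) → w ∈ Submonoid.closure T by
    exact fun w hw => H w.toList.length w le_rfl hw
  intro n
  induction n with
  | zero =>
    intro w hlen _
    have hw1 : w = 1 := toList_eq_nil_iff.1 (List.eq_nil_of_length_eq_zero (Nat.le_zero.1 hlen))
    exact hw1 ▸ one_mem _
  | succ n ih =>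
    intro w hlen hw
    by_cases hw1 : w = 1
    · exact hw1 ▸ one_mem _
    have hwL : w.toList ≠ [] := toList_ne_nil_of_ne_one hw1
    obtain ⟨v, hvred, hf1, hf2⟩ := exists_reduced_inverse hT1 hTo hw
    obtain ⟨w₁, α, γ, t, hw12, hα, htw⟩ := right_analysis hT1 hwL v []
      (by simpa using reduced_embl w.toList) (by simpa using hf1)
    have hwW : w = FreeMonoid.ofList w₁ * FreeMonoid.ofList α := by
      apply toList_inj
      rw [FreeMonoid.toList_mul, FreeMonoid.toList_ofList, FreeMonoid.toList_ofList]
      exact hw12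
    have htv : (t : FreeMonoid X) = FreeMonoid.ofList α * FreeMonoid.ofList γ := by
      apply toList_inj
      rw [FreeMonoid.toList_mul, FreeMonoid.toList_ofList, FreeMonoid.toList_ofList]
      exact htw
    have hA : IsUnit (natHom T (FreeMonoid.ofList α)) := by
      apply isUnit_of_mul_one_of_one_mul
        (b := natHom T (FreeMonoid.ofList γ) * invElt T t)
        (c := ↑hw.unit⁻¹ * natHom T (FreeMonoid.ofList w₁))
      · rw [← mul_assoc, ← map_mul, ← htv]
        exact natHom_mul_invElt t
      · rw [mul_assoc, ← map_mul, ← hwW]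
        exact hw.val_inv_mul
    by_cases hW1 : w₁ = []
    · -- `w` is a prefix of `t`
      have hwA : w = FreeMonoid.ofList α := by
        rw [hwW, hW1, show FreeMonoid.ofList ([] : List X) = 1 from rfl, one_mul]
      obtain ⟨τ, w₂, σ, s, hw34, hτ, hsw⟩ := left_analysis hT1 hwL hvred hf2
      have hwW' : w = FreeMonoid.ofList τ * FreeMonoid.ofList w₂ := by
        apply toList_inj
        rw [FreeMonoid.toList_mul, FreeMonoid.toList_ofList, FreeMonoid.toList_ofList]
        exact hw34
      have hsv : (s : FreeMonoid X) = FreeMonoid.ofList σ * FreeMonoid.ofList τ := by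
        apply toList_inj
        rw [FreeMonoid.toList_mul, FreeMonoid.toList_ofList, FreeMonoid.toList_ofList]
        exact hsw
      have hTau : IsUnit (natHom T (FreeMonoid.ofList τ)) := by
        apply isUnit_of_mul_one_of_one_mul
          (b := natHom T (FreeMonoid.ofList w₂) * ↑hw.unit⁻¹)
          (c := invElt T s * natHom T (FreeMonoid.ofList σ))
        · rw [← mul_assoc, ← map_mul, ← hwW']
          exact hw.mul_val_inv
        · rw [mul_assoc, ← map_mul, ← hsv]
          exact invElt_mul_natHom s
      by_cases hW2 : w₂ = []
      · have hwTau : w = FreeMonoid.ofList τ := by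
          rw [hwW', hW2, show FreeMonoid.ofList ([] : List X) = 1 from rfl, mul_one]
        by_cases hσγ : σ = [] ∧ γ = []
        · have hws : (s : FreeMonoid X) = w := by
            rw [hsv, hσγ.1, show FreeMonoid.ofList ([] : List X) = 1 from rfl, one_mul,
              ← hwTau]
          exact hws ▸ Submonoid.subset_closure s.2
        · exfalso
          apply hTo s.1 s.2 t.1 t.2
          refine overlap_mk (A := σ) (B := w.toList) (C := γ) hwL ?_ ?_ ?_
          · rcases not_and_or.1 hσγ with h | h
            exacts [Or.inl h, Or.inr h]
          · have hwt : w.toList = τ := by rw [hw34, hW2, List.append_nil]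
            rw [hsw, hwt]
          · have hwa : w.toList = α := by rw [hwA, FreeMonoid.toList_ofList]
            rw [htw, hwa]
      · -- `τ` is shorter than `w`
        have hwt2 : w.toList = τ ++ w₂ := hw34
        have hlen2 := congrArg List.length hwt2
        rw [List.length_append] at hlen2
        have hlτ : τ.length ≤ n := by
          have hpos : 0 < w₂.length := List.length_pos_iff.2 hW2
          omega
        have hTc : FreeMonoid.ofList τ ∈ Submonoid.closure T :=
          ih (FreeMonoid.ofList τ) (by rw [FreeMonoid.toList_ofList]; exact hlτ) hTau
        obtain ⟨τ', tk, hτ'c, htk, hTauEq⟩ := closure_tail hTc (ofList_ne_one hτ)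
        by_cases h0 : FreeMonoid.ofList σ * τ' = 1
        · obtain ⟨hσ1, hτ'1⟩ := mul_eq_one_free h0
          have hTk : FreeMonoid.ofList τ = tk := by rw [hTauEq, hτ'1, one_mul]
          have hwtk : w = tk * FreeMonoid.ofList w₂ := by rw [hwW', hTk]
          have hW2unit : IsUnit (natHom T (FreeMonoid.ofList w₂)) := by
            apply isUnit_right_of_mul (x := natHom T tk)
            · rw [← map_mul, ← hwtk]; exact hw
            · exact isUnit_natHom_of_mem htk
          have hlw2 : w₂.length ≤ n := by
            have hpos : 0 < τ.length := List.length_pos_iff.2 hτ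
            omega
          have hW2c := ih (FreeMonoid.ofList w₂)
            (by rw [FreeMonoid.toList_ofList]; exact hlw2) hW2unit
          rw [hwtk]
          exact Submonoid.mul_mem _ (Submonoid.subset_closure htk) hW2c
        · exfalso
          apply hTo s.1 s.2 tk htk
          refine ⟨FreeMonoid.ofList σ * τ', tk, 1, ?_, Or.inl h0, ?_, (mul_one tk).symm⟩
          · exact fun h => hT1 (h ▸ htk)
          · rw [hsv, hTauEq, ← mul_assoc]
    · -- `α` is shorter than `w`
      have hwt1 : w.toList = w₁ ++ α := hw12
      have hlen1 := congrArg List.length hwt1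
      rw [List.length_append] at hlen1
      have hlα : α.length ≤ n := by
        have hpos : 0 < w₁.length := List.length_pos_iff.2 hW1
        omega
      have hAc : FreeMonoid.ofList α ∈ Submonoid.closure T :=
        ih (FreeMonoid.ofList α) (by rw [FreeMonoid.toList_ofList]; exact hlα) hA
      obtain ⟨t₁, α', ht₁, hα'c, hAeq⟩ := closure_head hAc (ofList_ne_one hα)
      by_cases h0 : α' * FreeMonoid.ofList γ = 1
      · obtain ⟨hα'1, hγ1⟩ := mul_eq_one_free h0
        have hAt : FreeMonoid.ofList α = t₁ := by rw [hAeq, hα'1, mul_one]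
        have hwt1' : w = FreeMonoid.ofList w₁ * t₁ := by rw [hwW, hAt]
        have hW1unit : IsUnit (natHom T (FreeMonoid.ofList w₁)) := by
          apply isUnit_left_of_mul (y := natHom T t₁)
          · rw [← map_mul, ← hwt1']; exact hw
          · exact isUnit_natHom_of_mem ht₁
        have hlw1 : w₁.length ≤ n := by
          have hpos : 0 < α.length := List.length_pos_iff.2 hα
          omega
        have hW1c := ih (FreeMonoid.ofList w₁)
          (by rw [FreeMonoid.toList_ofList]; exact hlw1) hW1unit
        rw [hwt1']
        exact Submonoid.mul_mem _ hW1c (Submonoid.subset_closure ht₁)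
      · exfalso
        apply hTo t₁ ht₁ t.1 t.2
        refine ⟨1, t₁, α' * FreeMonoid.ofList γ, ?_, Or.inr h0, (one_mul t₁).symm, ?_⟩
        · exact fun h => hT1 (h ▸ ht₁)
        · rw [htv, hAeq, mul_assoc]

end Alg

/-! ### Transfer of invertibility and the main theorem -/

section Final

variable {X : Type*}

theorem unit_transfer {A B : Set (FreeMonoid X)}
    (h : ∀ w ∈ A, IsUnit (natHom B w)) {u : FreeMonoid X}
    (hu : IsUnit (natHom A u)) : IsUnit (natHom B u) := by
  set f : X ⊕ ↥A → AdjInv B := Sum.elim (fun x => natHom B (FreeMonoid.of x))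
    (fun w => ↑(h w.1 w.2).unit⁻¹) with hf
  set ψ : FreeMonoid (X ⊕ ↥A) →* AdjInv B := FreeMonoid.lift f with hψ
  have hψe : ∀ u : FreeMonoid X, ψ (emb A u) = natHom B u := by
    intro u
    have hcomp : ψ.comp (emb A) = natHom B := FreeMonoid.hom_eq fun x => by
      show ψ (emb A (FreeMonoid.of x)) = natHom B (FreeMonoid.of x)
      rw [emb, FreeMonoid.map_of, hψ, FreeMonoid.lift_eval_of, hf]
      rfl
    exact DFunLike.congr_fun hcomp u
  have hψi : ∀ t : ↥A, ψ (igen A t) = ↑(h t.1 t.2).unit⁻¹ := by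
    intro t
    rw [igen, hψ, FreeMonoid.lift_eval_of, hf]
    rfl
  have hker : invCon A ≤ Con.ker ψ := by
    apply Con.conGen_le.2
    intro x y hxy
    rw [Con.ker_rel]
    cases hxy with
    | mul_inv t =>
      rw [map_mul, map_one, hψe, hψi]
      exact (h t.1 t.2).mul_val_inv
    | inv_mul t =>
      rw [map_mul, map_one, hψe, hψi]
      exact (h t.1 t.2).val_inv_mul
  have hφ : ((invCon A).lift ψ hker) (natHom A u) = natHom B u := by
    show ((invCon A).lift ψ hker) ((invCon A).mk' (emb A u)) = natHom B u
    rw [Con.lift_mk']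
    exact hψe u
  exact hφ ▸ hu.map ((invCon A).lift ψ hker)

end Final

/-- for finite `S` there is exactly one overlap-free subset of
`⟨X⟩ \ {1}` inverse-equivalent to `S`, namely the described set `D`. -/
theorem stmt11 (X : Type*) (S : Set (FreeMonoid X)) (hS : S.Finite)
    (D : Set (FreeMonoid X))
    (hD : D = {w : FreeMonoid X | w ≠ 1 ∧ IsUnit (natHom S w) ∧
      ¬∃ u v : FreeMonoid X, u ≠ 1 ∧ v ≠ 1 ∧
        IsUnit (natHom S u) ∧ IsUnit (natHom S v) ∧ w = u * v}) :
    ((1 : FreeMonoid X) ∉ D ∧ OverlapFree D ∧ InvEquiv S D) ∧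
    ∀ T : Set (FreeMonoid X),
      (1 : FreeMonoid X) ∉ T → OverlapFree T → InvEquiv S T → T = D := by
  have hD1 : (1 : FreeMonoid X) ∉ D := by
    rw [hD]
    rintro ⟨h, -⟩
    exact h rfl
  have hDsub : ∀ w ∈ D, IsUnit (natHom S w) := by
    intro w hw
    rw [hD] at hw
    exact hw.2.1
  have hDov : OverlapFree D := by
    rintro u hu v hv ⟨a, b, c, hb, hac, hu', hv'⟩
    rw [hD] at hu hv
    obtain ⟨hu1, huU, huf⟩ := hu
    obtain ⟨hv1, hvU, hvf⟩ := hv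
    have hab : IsUnit (natHom S a * natHom S b) := by rw [← map_mul, ← hu']; exact huU
    have hbc : IsUnit (natHom S b * natHom S c) := by rw [← map_mul, ← hv']; exact hvU
    have hbU : IsUnit (natHom S b) := isUnit_middle hab hbc
    have haU : IsUnit (natHom S a) := isUnit_left_of_mul hab hbU
    have hcU : IsUnit (natHom S c) := isUnit_right_of_mul hbc hbU
    rcases hac with ha | hc
    · exact huf ⟨a, b, ha, hb, haU, hbU, hu'⟩
    · exact hvf ⟨b, c, hb, hc, hbU, hcU, hv'⟩
  have hFact : ∀ (n : ℕ) (w : FreeMonoid X), w.toList.length ≤ n →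
      IsUnit (natHom S w) → w ∈ Submonoid.closure D := by
    intro n
    induction n with
    | zero =>
      intro w hlen _
      exact (toList_eq_nil_iff.1
        (List.eq_nil_of_length_eq_zero (Nat.le_zero.1 hlen))) ▸ one_mem _
    | succ n ih =>
      intro w hlen hw
      by_cases hw1 : w = 1
      · exact hw1 ▸ one_mem _
      by_cases hf : ∃ u v : FreeMonoid X, u ≠ 1 ∧ v ≠ 1 ∧
          IsUnit (natHom S u) ∧ IsUnit (natHom S v) ∧ w = u * v
      · obtain ⟨u, v, hu1, hv1, huU, hvU, rfl⟩ := hf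
        have hlen' := congrArg List.length (FreeMonoid.toList_mul u v)
        rw [List.length_append] at hlen'
        have hu0 : 0 < u.toList.length := List.length_pos_iff.2 (toList_ne_nil_of_ne_one hu1)
        have hv0 : 0 < v.toList.length := List.length_pos_iff.2 (toList_ne_nil_of_ne_one hv1)
        exact Submonoid.mul_mem _ (ih u (by omega) huU) (ih v (by omega) hvU)
      · refine Submonoid.subset_closure ?_
        rw [hD]
        exact ⟨hw1, hw, hf⟩
  refine ⟨⟨hD1, hDov, hDsub, ?_⟩, ?_⟩
  · intro w hwS
    exact isUnit_natHom_of_mem_closure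
      (hFact w.toList.length w le_rfl (isUnit_natHom_of_mem hwS))
  · intro T hT1 hTo hTE
    obtain ⟨hTS, hST⟩ := hTE
    have tr1 : ∀ u : FreeMonoid X, IsUnit (natHom T u) → IsUnit (natHom S u) :=
      fun u hu => unit_transfer hTS hu
    have tr2 : ∀ u : FreeMonoid X, IsUnit (natHom S u) → IsUnit (natHom T u) :=
      fun u hu => unit_transfer hST hu
    apply Set.Subset.antisymm
    · intro t ht
      rw [hD]
      refine ⟨fun h => hT1 (h ▸ ht), hTS t ht, ?_⟩
      rintro ⟨u, v, hu1, hv1, huU, hvU, rfl⟩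
      have huc : u ∈ Submonoid.closure T := key hT1 hTo u (tr2 u huU)
      obtain ⟨t₁, u', ht₁, hu'c, rfl⟩ := closure_head huc hu1
      exact hTo t₁ ht₁ _ ht ⟨1, t₁, u' * v, fun h => hT1 (h ▸ ht₁),
        Or.inr fun h => hv1 (mul_eq_one_free h).2, (one_mul t₁).symm, mul_assoc t₁ u' v⟩
    · intro d hd
      rw [hD] at hd
      obtain ⟨hd1, hdU, hdf⟩ := hd
      have hdc : d ∈ Submonoid.closure T := key hT1 hTo d (tr2 d hdU)
      obtain ⟨t₁, w', ht₁, hw'c, rfl⟩ := closure_head hdc hd1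
      by_cases hw' : w' = 1
      · rw [hw', mul_one]
        exact ht₁
      · exact absurd ⟨t₁, w', fun h => hT1 (h ▸ ht₁), hw',
          tr1 _ (isUnit_natHom_of_mem ht₁), tr1 _ (isUnit_natHom_of_mem_closure hw'c), rfl⟩ hdf

end AdjoinInverses
end

section
/- Let X be a set and T a subset of X (regarded as a subset of the free monoid ⟨X⟩ via the words of length one). Then ⟨X : i(T)⟩ is isomorphic to the free product, as monoids (the coproduct in the category of monoids), of the free group on T and the free monoid on X\T, via an isomorphism carrying the image of each t ∈ T to the corresponding generator of the free group and the image of each x ∈ X\T to the corresponding generator of the free monoid. -/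
namespace AdjoinInverses

variable {X : Type*}

section Aux

lemma fgHomExt {α M : Type*} [Monoid M] {f g : FreeGroup α →* M}
    (h : ∀ a, f (FreeGroup.of a) = g (FreeGroup.of a)) : f = g := by
  have h2 : f.toHomUnits = g.toHomUnits :=
    FreeGroup.ext_hom _ _ fun a => Units.ext (by simp [h a])
  refine MonoidHom.ext fun x => ?_
  have := congrArg (fun k => ((k x : Mˣ) : M)) h2
  simpa using this

variable (X : Type*) (T₀ : Set X)

abbrev S₀ : Set (FreeMonoid X) := FreeMonoid.of '' T₀
abbrev Cop := Monoid.Coprod (FreeGroup T₀) (FreeMonoid {x : X // x ∉ T₀})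

noncomputable def tOf (w : S₀ X T₀) : T₀ := ⟨w.2.choose, w.2.choose_spec.1⟩

lemma tOf_spec (w : S₀ X T₀) : FreeMonoid.of (tOf X T₀ w).1 = w.1 := w.2.choose_spec.2

open Classical in
noncomputable def fgen : X ⊕ (S₀ X T₀) → Cop X T₀
  | Sum.inl x => if h : x ∈ T₀ then Monoid.Coprod.inl (FreeGroup.of ⟨x, h⟩)
      else Monoid.Coprod.inr (FreeMonoid.of ⟨x, h⟩)
  | Sum.inr w => Monoid.Coprod.inl ((FreeGroup.of (tOf X T₀ w))⁻¹)

noncomputable def f : FreeMonoid (X ⊕ (S₀ X T₀)) →* Cop X T₀ := FreeMonoid.lift (fgen X T₀)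

lemma f_emb_of (t : T₀) :
    f X T₀ (emb _ (FreeMonoid.of t.1)) = Monoid.Coprod.inl (FreeGroup.of t) := by
  simp [f, emb, fgen, t.2]

lemma f_igen (w : S₀ X T₀) :
    f X T₀ (igen _ w) = Monoid.Coprod.inl ((FreeGroup.of (tOf X T₀ w))⁻¹) := by
  simp [f, igen, fgen]

lemma f_rel : invCon (S₀ X T₀) ≤ Con.ker (f X T₀) := by
  rw [invCon]
  refine Con.conGen_le.mpr ?_
  rintro a b (⟨w⟩ | ⟨w⟩) <;>
  · have h1 : emb (S₀ X T₀) w.1 = emb (S₀ X T₀) (FreeMonoid.of (tOf X T₀ w).1) := by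
      rw [tOf_spec]
    show f X T₀ _ = f X T₀ 1
    rw [map_one, map_mul, f_igen, h1, f_emb_of, ← map_mul]
    first
      | rw [mul_inv_cancel, map_one]
      | rw [inv_mul_cancel, map_one]

noncomputable def F : AdjInv (S₀ X T₀) →* Cop X T₀ := Con.lift _ (f X T₀) (f_rel X T₀)

noncomputable def unitOf (t : T₀) : (AdjInv (S₀ X T₀))ˣ where
  val := natHom (S₀ X T₀) (FreeMonoid.of t.1)
  inv := invElt (S₀ X T₀) ⟨FreeMonoid.of t.1, ⟨t.1, t.2, rfl⟩⟩
  val_inv := by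
    have h : invCon (S₀ X T₀)
        (emb (S₀ X T₀) (FreeMonoid.of t.1) * igen (S₀ X T₀) ⟨FreeMonoid.of t.1, ⟨t.1, t.2, rfl⟩⟩)
        1 := ConGen.Rel.of _ _ (InvRel.mul_inv (S := S₀ X T₀) ⟨FreeMonoid.of t.1, ⟨t.1, t.2, rfl⟩⟩)
    have := ((invCon (S₀ X T₀)).eq).mpr h
    exact this
  inv_val := by
    have h : invCon (S₀ X T₀)
        (igen (S₀ X T₀) ⟨FreeMonoid.of t.1, ⟨t.1, t.2, rfl⟩⟩ * emb (S₀ X T₀) (FreeMonoid.of t.1))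
        1 := ConGen.Rel.of _ _ (InvRel.inv_mul (S := S₀ X T₀) ⟨FreeMonoid.of t.1, ⟨t.1, t.2, rfl⟩⟩)
    have := ((invCon (S₀ X T₀)).eq).mpr h
    exact this

noncomputable def G : Cop X T₀ →* AdjInv (S₀ X T₀) :=
  Monoid.Coprod.lift
    ((Units.coeHom _).comp (FreeGroup.lift (unitOf X T₀)))
    (FreeMonoid.lift fun x => natHom (S₀ X T₀) (FreeMonoid.of x.1))

lemma G_inl (t : T₀) : G X T₀ (Monoid.Coprod.inl (FreeGroup.of t)) =
    natHom (S₀ X T₀) (FreeMonoid.of t.1) := by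
  simp [G, unitOf]

lemma G_inl_inv (t : T₀) : G X T₀ (Monoid.Coprod.inl ((FreeGroup.of t)⁻¹)) =
    invElt (S₀ X T₀) ⟨FreeMonoid.of t.1, ⟨t.1, t.2, rfl⟩⟩ := by
  simp [G, unitOf]
  rfl

lemma quotHomExt {M N : Type*} [Monoid M] [Monoid N] {c : Con M} {f g : c.Quotient →* N}
    (h : f.comp c.mk' = g.comp c.mk') : f = g := by
  refine MonoidHom.ext fun x => ?_
  induction x using Con.induction_on with
  | H w => exact DFunLike.congr_fun h w

lemma natHom_of (x : X) :
    natHom (S₀ X T₀) (FreeMonoid.of x) = (invCon (S₀ X T₀)).mk' (FreeMonoid.of (Sum.inl x)) := by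
  show (invCon (S₀ X T₀)).mk' (emb (S₀ X T₀) (FreeMonoid.of x)) = _
  rw [emb, FreeMonoid.map_of]

lemma F_mk (u : FreeMonoid (X ⊕ (S₀ X T₀))) :
    F X T₀ ((invCon (S₀ X T₀)).mk' u) = f X T₀ u := rfl

lemma GF : (G X T₀).comp (F X T₀) = MonoidHom.id _ := by
  apply quotHomExt
  apply FreeMonoid.hom_eq
  rintro (x | w)
  · show G X T₀ (f X T₀ (FreeMonoid.of (Sum.inl x))) = _
    rw [show f X T₀ (FreeMonoid.of (Sum.inl x)) = fgen X T₀ (Sum.inl x) from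
      FreeMonoid.lift_eval_of _ _]
    by_cases h : x ∈ T₀
    · simp only [fgen, dif_pos h]
      rw [G_inl X T₀ ⟨x, h⟩, natHom_of]
      rfl
    · simp only [fgen, dif_neg h]
      show natHom (S₀ X T₀) (FreeMonoid.of x) = _
      rw [natHom_of]
      rfl
  · show G X T₀ (f X T₀ (FreeMonoid.of (Sum.inr w))) = _
    rw [show f X T₀ (FreeMonoid.of (Sum.inr w)) = fgen X T₀ (Sum.inr w) from
      FreeMonoid.lift_eval_of _ _]
    show G X T₀ (Monoid.Coprod.inl ((FreeGroup.of (tOf X T₀ w))⁻¹)) = _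
    rw [G_inl_inv]
    show invElt (S₀ X T₀) _ = invElt (S₀ X T₀) w
    exact congrArg (invElt (S₀ X T₀)) (Subtype.ext (tOf_spec X T₀ w))

lemma F_natHom_mem (t : T₀) :
    F X T₀ (natHom (S₀ X T₀) (FreeMonoid.of t.1)) = Monoid.Coprod.inl (FreeGroup.of t) := by
  rw [natHom_of, F_mk]
  rw [show f X T₀ (FreeMonoid.of (Sum.inl t.1)) = fgen X T₀ (Sum.inl t.1) from
    FreeMonoid.lift_eval_of _ _]
  simp [fgen, t.2]

lemma F_natHom_notMem (x : {x : X // x ∉ T₀}) :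
    F X T₀ (natHom (S₀ X T₀) (FreeMonoid.of x.1)) = Monoid.Coprod.inr (FreeMonoid.of x) := by
  rw [natHom_of, F_mk]
  rw [show f X T₀ (FreeMonoid.of (Sum.inl x.1)) = fgen X T₀ (Sum.inl x.1) from
    FreeMonoid.lift_eval_of _ _]
  simp [fgen, x.2]

lemma FG : (F X T₀).comp (G X T₀) = MonoidHom.id _ := by
  apply Monoid.Coprod.hom_ext
  · apply fgHomExt
    intro t
    simp only [MonoidHom.comp_apply, MonoidHom.id_apply]
    rw [G_inl, F_natHom_mem]
  · apply FreeMonoid.hom_eq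
    intro x
    simp only [MonoidHom.comp_apply, MonoidHom.id_apply]
    have : G X T₀ (Monoid.Coprod.inr (FreeMonoid.of x)) = natHom (S₀ X T₀) (FreeMonoid.of x.1) := by
      simp [G]
    rw [this, F_natHom_notMem]

end Aux

/-- for `T ⊆ X`, the monoid `⟨X : i(T)⟩` is the coproduct (free product
as monoids) of the free group on `T` and the free monoid on `X \ T`. -/
theorem stmt12 (X : Type*) (T₀ : Set X) :
    ∃ φ : AdjInv (FreeMonoid.of '' T₀ : Set (FreeMonoid X)) ≃*
        Monoid.Coprod (FreeGroup T₀) (FreeMonoid {x : X // x ∉ T₀}),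
      (∀ t : T₀, φ (natHom (FreeMonoid.of '' T₀) (FreeMonoid.of t.1)) =
        Monoid.Coprod.inl (FreeGroup.of t)) ∧
      (∀ x : {x : X // x ∉ T₀}, φ (natHom (FreeMonoid.of '' T₀) (FreeMonoid.of x.1)) =
        Monoid.Coprod.inr (FreeMonoid.of x)) := by
  refine ⟨MonoidHom.toMulEquiv (F X T₀) (G X T₀) (GF X T₀) (FG X T₀), ?_, ?_⟩
  · exact fun t => F_natHom_mem X T₀ t
  · exact fun x => F_natHom_notMem X T₀ x

end AdjoinInverses
end
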